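/- Let m ≤ n and let p be a monic real polynomial of degree m with m distinct real roots λ_1, …, λ_m. Define the two-variable polynomial P(x,y) = y^{n−m} p(xy) and q(x,y,θ) = Σ_{k≥0} ((−θ)^k/k!) ∂_x^k ∂_y^k P(x,y) (a finite sum). Fix an index i and suppose r is a real-valued function, differentiable at 0, with r(0) = λ_i and q(r(θ), 1, θ) = 0 for all θ in a neighborhood of 0. Then r'(0) = n + Σ_{j≠i} (λ_i + λ_j)/(λ_i − λ_j). -/

import Mathlib

open Polynomial

noncomputable section

private lemma stmt7_pderiv_aeval (i : Fin 2) (f : MvPolynomial (Fin 2) ℝ) (p : ℝ[X]) :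
    MvPolynomial.pderiv i (Polynomial.aeval f p)
      = Polynomial.aeval f (derivative p) * MvPolynomial.pderiv i f := by
  have := Derivation.comp_aeval_eq (A := MvPolynomial (Fin 2) ℝ) (MvPolynomial.pderiv i) p (a := f)
  rw [this, smul_eq_mul]

private lemma stmt7_pderiv_natCast (i : Fin 2) (a : ℕ) :
    MvPolynomial.pderiv i (a : MvPolynomial (Fin 2) ℝ) = 0 := by
  rw [← map_natCast (MvPolynomial.C : ℝ →+* MvPolynomial (Fin 2) ℝ) a, MvPolynomial.pderiv_C]

private lemma stmt7_pk0 (a : ℕ) (p : ℝ[X]) :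
    MvPolynomial.aeval ![Polynomial.X, 1]
      ((MvPolynomial.X 1 : MvPolynomial (Fin 2) ℝ) ^ a *
        Polynomial.aeval (MvPolynomial.X 0 * MvPolynomial.X 1) p) = p := by
  rw [map_mul, map_pow, ← Polynomial.aeval_algHom_apply]
  simp

private lemma stmt7_pk1 (a : ℕ) (p : ℝ[X]) :
    MvPolynomial.aeval ![Polynomial.X, 1]
      (MvPolynomial.pderiv 0 (MvPolynomial.pderiv 1
        ((MvPolynomial.X 1 : MvPolynomial (Fin 2) ℝ) ^ a *
          Polynomial.aeval (MvPolynomial.X 0 * MvPolynomial.X 1) p)))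
      = ((a : ℝ[X]) + 1) * derivative p + Polynomial.X * derivative (derivative p) := by
  simp only [MvPolynomial.pderiv_mul, MvPolynomial.pderiv_pow, stmt7_pderiv_aeval,
    stmt7_pderiv_natCast,
    MvPolynomial.pderiv_X_self, MvPolynomial.pderiv_X_of_ne (show (0:Fin 2) ≠ 1 by decide),
    MvPolynomial.pderiv_X_of_ne (show (1:Fin 2) ≠ 0 by decide), MvPolynomial.pderiv_C,
    mul_one, mul_zero, zero_mul, add_zero, zero_add,
    map_add, map_mul, map_pow, map_natCast, map_one,
    ← Polynomial.aeval_algHom_apply, MvPolynomial.aeval_X,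
    Matrix.cons_val_zero, Matrix.cons_val_one, Matrix.head_cons, one_pow,
    Polynomial.aeval_X_left_apply]
  ring

private lemma stmt7_bridge (x : ℝ) (S : MvPolynomial (Fin 2) ℝ) :
    MvPolynomial.eval ![x, 1] S
      = Polynomial.eval x (MvPolynomial.aeval ![Polynomial.X, 1] S) := by
  induction S using MvPolynomial.induction_on with
  | C a => simp
  | add p q hp hq => simp [hp, hq]
  | mul_X p j hp => fin_cases j <;> simp [hp]

private lemma stmt7_dprod {ι : Type*} [DecidableEq ι] (s : Finset ι) (f : ι → Polynomial ℝ) :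
    derivative (∏ j ∈ s, f j) = ∑ j ∈ s, (∏ k ∈ s.erase j, f k) * derivative (f j) := by
  induction s using Finset.induction_on with
  | empty => simp
  | insert _ _ ha ih =>
    rename_i a s'
    rw [Finset.prod_insert ha, derivative_mul, ih, Finset.mul_sum, Finset.sum_insert ha,
      Finset.erase_insert ha]
    congr 1
    · rw [mul_comm]
    · refine Finset.sum_congr rfl fun j hj => ?_
      rw [Finset.erase_insert_of_ne (fun e => ha (by rw [e]; exact hj)),
        Finset.prod_insert (fun hc => ha (Finset.mem_of_mem_erase hc)), mul_assoc]

private lemma stmt7_fact (m : ℕ) (p : ℝ[X]) (hmonic : p.Monic) (hdeg : p.natDegree = m)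
    (lam : Fin m → ℝ) (hinj : Function.Injective lam)
    (hroots : ∀ j, p.eval (lam j) = 0) :
    p = ∏ j : Fin m, (X - C (lam j)) := by
  classical
  have hp0 : p ≠ 0 := hmonic.ne_zero
  set t : Multiset ℝ := Multiset.map lam Finset.univ.val with ht
  have htnodup : t.Nodup := Finset.univ.nodup.map hinj
  have htsub : t ⊆ p.roots := by
    intro x hx
    rw [ht, Multiset.mem_map] at hx
    obtain ⟨j, -, rfl⟩ := hx
    exact (Polynomial.mem_roots hp0).mpr (hroots j)
  have htle : t ≤ p.roots := (Multiset.le_iff_subset htnodup).mpr htsub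
  have htcard : Multiset.card t = m := by simp [ht]
  have hcard : Multiset.card p.roots = m :=
    le_antisymm (hdeg ▸ p.card_roots') (htcard ▸ Multiset.card_le_card htle)
  have hteq : t = p.roots := Multiset.eq_of_le_of_card_le htle (by rw [hcard, htcard])
  have hsplits : p.Splits :=
    Polynomial.splits_iff_card_roots.mpr (by rw [hcard, hdeg])
  have hfact := hsplits.eq_prod_roots_of_monic hmonic
  rw [← hteq, ht, Multiset.map_map] at hfact
  rw [hfact]
  rfl

theorem stmt7 (m n : ℕ) (hmn : m ≤ n) (p : ℝ[X]) (hmonic : p.Monic) (hdeg : p.natDegree = m)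
    (lam : Fin m → ℝ) (hinj : Function.Injective lam)
    (hroots : ∀ j, p.eval (lam j) = 0)
    (i : Fin m) (r : ℝ → ℝ) (hr : DifferentiableAt ℝ r 0) (hr0 : r 0 = lam i)
    -- `q(r(θ), 1, θ) = 0` for `θ` near `0`, where
    -- `q(·,·,θ) = Σ_k ((−θ)^k/k!) ∂_x^k ∂_y^k [y^(n−m) p(x·y)]`:
    (hq : ∀ᶠ θ in nhds (0 : ℝ),
      MvPolynomial.eval ![r θ, 1]
        (∑ k ∈ Finset.range (m + 1), ((-θ) ^ k / (k.factorial : ℝ)) •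
          (fun s => MvPolynomial.pderiv 0 s)^[k]
            ((fun s => MvPolynomial.pderiv 1 s)^[k]
              ((MvPolynomial.X 1 : MvPolynomial (Fin 2) ℝ) ^ (n - m) *
                Polynomial.eval₂ MvPolynomial.C
                  (MvPolynomial.X 0 * MvPolynomial.X 1) p))) = 0) :
    deriv r 0 = n + ∑ j ∈ Finset.univ.erase i, (lam i + lam j) / (lam i - lam j) := by
  classical
  have hm1 : 0 < m := i.pos
  set P : MvPolynomial (Fin 2) ℝ :=
    (MvPolynomial.X 1 : MvPolynomial (Fin 2) ℝ) ^ (n - m) *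
      Polynomial.eval₂ MvPolynomial.C (MvPolynomial.X 0 * MvPolynomial.X 1) p with hP
  have hPa : P = (MvPolynomial.X 1 : MvPolynomial (Fin 2) ℝ) ^ (n - m) *
      Polynomial.aeval (MvPolynomial.X 0 * MvPolynomial.X 1) p := by
    rw [hP, Polynomial.aeval_def, MvPolynomial.algebraMap_eq]
  set Q : ℕ → MvPolynomial (Fin 2) ℝ := fun k =>
    (fun s => MvPolynomial.pderiv 0 s)^[k] ((fun s => MvPolynomial.pderiv 1 s)^[k] P) with hQ
  set Pk : ℕ → ℝ[X] := fun k => MvPolynomial.aeval ![Polynomial.X, 1] (Q k) with hPk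
  have hF : ∀ θ x : ℝ,
      MvPolynomial.eval ![x, 1] (∑ k ∈ Finset.range (m + 1), ((-θ) ^ k / (k.factorial : ℝ)) • Q k)
        = ∑ k ∈ Finset.range (m + 1), (-θ) ^ k / (k.factorial : ℝ) * Polynomial.eval x (Pk k) := by
    intro θ x
    rw [map_sum]
    refine Finset.sum_congr rfl fun k _ => ?_
    rw [MvPolynomial.smul_eval, stmt7_bridge]
  set h : ℝ → ℝ := fun θ =>
    ∑ k ∈ Finset.range (m + 1), (-θ) ^ k / (k.factorial : ℝ) * Polynomial.eval (r θ) (Pk k)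
    with hh
  have hq' : ∀ᶠ θ in nhds (0 : ℝ), h θ = 0 := by
    filter_upwards [hq] with θ hθ
    exact ((hF θ (r θ)).symm.trans hθ :)
  set dterm : ℕ → ℝ := fun k =>
    (↑k * (-(0:ℝ)) ^ (k - 1) * (-1) / (k.factorial : ℝ)) * Polynomial.eval (r 0) (Pk k)
      + ((-(0:ℝ)) ^ k / (k.factorial : ℝ)) *
          (Polynomial.eval (r 0) (derivative (Pk k)) * deriv r 0)
    with hdterm
  have hder : HasDerivAt h (∑ k ∈ Finset.range (m + 1), dterm k) 0 := by
    apply HasDerivAt.fun_sum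
    intro k _
    have h1 : HasDerivAt (fun θ : ℝ => (-θ) ^ k)
        (↑k * (-(0:ℝ)) ^ (k - 1) * (-1)) 0 := (hasDerivAt_neg (0:ℝ)).pow k
    have h2 := h1.div_const (k.factorial : ℝ)
    have h3 : HasDerivAt (fun θ : ℝ => Polynomial.eval (r θ) (Pk k))
        (Polynomial.eval (r 0) (derivative (Pk k)) * deriv r 0) 0 :=
      (Polynomial.hasDerivAt (Pk k) (r 0)).comp 0 hr.hasDerivAt
    exact h2.mul h3
  have hderiv0 : deriv h 0 = 0 := by
    rw [Filter.EventuallyEq.deriv_eq (hq'.mono fun θ hθ => hθ)]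
    exact deriv_const 0 0
  have hsum0 : (∑ k ∈ Finset.range (m + 1), dterm k) = 0 := by
    rw [← hder.deriv, hderiv0]
  -- reduce the sum to the k = 0 and k = 1 terms
  have e0 : dterm 0 = Polynomial.eval (lam i) (derivative (Pk 0)) * deriv r 0 := by
    simp [hdterm, hr0]
  have e1 : dterm 1 = -Polynomial.eval (lam i) (Pk 1) := by
    simp [hdterm, hr0]
  have erest : ∀ k : ℕ, dterm (k + 2) = 0 := by
    intro k
    simp [hdterm]
  have hkey : Polynomial.eval (lam i) (derivative (Pk 0)) * deriv r 0
      = Polynomial.eval (lam i) (Pk 1) := by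
    obtain ⟨m', rfl⟩ := Nat.exists_eq_succ_of_ne_zero hm1.ne'
    rw [Finset.sum_range_succ', Finset.sum_range_succ',
      Finset.sum_eq_zero (fun k _ => erest k)] at hsum0
    rw [e0, e1] at hsum0
    linarith
  -- compute Pk 0 and eval of Pk 1
  have hPk0 : Pk 0 = p := by
    rw [hPk]
    show MvPolynomial.aeval ![Polynomial.X, 1] P = p
    rw [hPa]
    exact stmt7_pk0 (n - m) p
  have hPk1 : Polynomial.eval (lam i) (Pk 1)
      = (((n : ℝ) - m) + 1) * Polynomial.eval (lam i) (derivative p)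
        + lam i * Polynomial.eval (lam i) (derivative (derivative p)) := by
    rw [hPk]
    show Polynomial.eval (lam i)
      (MvPolynomial.aeval ![Polynomial.X, 1]
        (MvPolynomial.pderiv 0 (MvPolynomial.pderiv 1 P))) = _
    rw [hPa, stmt7_pk1]
    have : ((n - m : ℕ) : ℝ) = (n : ℝ) - m := by
      rw [Nat.cast_sub hmn]
    simp [this]
  rw [hPk0] at hkey
  rw [hPk1] at hkey
  -- algebraic part
  have hfact := stmt7_fact m p hmonic hdeg lam hinj hroots
  set s : Finset (Fin m) := Finset.univ.erase i with hs
  set g : ℝ[X] := ∏ j ∈ s, (X - C (lam j)) with hg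
  have hpg : p = (X - C (lam i)) * g := by
    rw [hfact, hg, hs]
    exact (Finset.mul_prod_erase _ _ (Finset.mem_univ i)).symm
  set G : ℝ := Polynomial.eval (lam i) g with hG
  set G' : ℝ := Polynomial.eval (lam i) (derivative g) with hG'
  have hne : ∀ j ∈ s, lam i - lam j ≠ 0 := by
    intro j hj
    exact sub_ne_zero.mpr fun e => (Finset.ne_of_mem_erase hj) (hinj e.symm)
  have hGprod : G = ∏ j ∈ s, (lam i - lam j) := by
    rw [hG, hg, Polynomial.eval_prod]
    simp
  have hGne : G ≠ 0 := by
    rw [hGprod]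
    exact Finset.prod_ne_zero_iff.mpr hne
  have hp'x : derivative p = g + (X - C (lam i)) * derivative g := by
    rw [hpg, derivative_mul]
    simp
  have hp'e : Polynomial.eval (lam i) (derivative p) = G := by
    rw [hp'x]
    simp [hG]
  have hp''e : Polynomial.eval (lam i) (derivative (derivative p)) = 2 * G' := by
    rw [hp'x, derivative_add, derivative_mul]
    simp [hG']
    ring
  have hG'sum : G' = ∑ j ∈ s, ∏ k ∈ s.erase j, (lam i - lam k) := by
    rw [hG', hg, stmt7_dprod]
    simp [Polynomial.eval_finset_sum, Polynomial.eval_prod]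
  have hterm : ∀ j ∈ s, 2 * lam i * ∏ k ∈ s.erase j, (lam i - lam k)
      = ((lam i + lam j) / (lam i - lam j) + 1) * G := by
    intro j hj
    have hG2 : G = (lam i - lam j) * ∏ k ∈ s.erase j, (lam i - lam k) := by
      rw [hGprod]
      exact (Finset.mul_prod_erase _ _ hj).symm
    rw [hG2]
    field_simp [hne j hj]
    ring
  have hcards : (s.card : ℝ) = (m : ℝ) - 1 := by
    rw [hs, Finset.card_erase_of_mem (Finset.mem_univ i), Finset.card_univ, Fintype.card_fin,
      Nat.cast_sub hm1, Nat.cast_one]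
  have hsum2 : 2 * lam i * G'
      = (∑ j ∈ s, (lam i + lam j) / (lam i - lam j)) * G + ((m : ℝ) - 1) * G := by
    rw [hG'sum, Finset.mul_sum, Finset.sum_congr rfl hterm, ← hcards]
    simp only [add_mul, one_mul]
    rw [Finset.sum_add_distrib, Finset.sum_const, nsmul_eq_mul, ← Finset.sum_mul]
  rw [hp'e, hp''e] at hkey
  -- hkey : G * deriv r 0 = ((n - m) + 1) * G + lam i * (2 * G')
  have : G * deriv r 0
      = G * ((n : ℝ) + ∑ j ∈ s, (lam i + lam j) / (lam i - lam j)) := by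
    rw [hkey]
    have : lam i * (2 * G') = 2 * lam i * G' := by ring
    rw [this, hsum2]
    ring
  exact mul_left_cancel₀ hGne this

end
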